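/- In the system Ax + (4) + (AxNec), the Necessitation rule is admissible: if φ is derivable from the empty set, then so is □φ. -/

import Mathlib

namespace EJ

/-- Justification terms Tm(C): variables, constants, application and sum. -/
inductive Tm : Type
  | var : ℕ → Tm
  | const : ℕ → Tm
  | app : Tm → Tm → Tm
  | plus : Tm → Tm → Tm
  deriving DecidableEq

/-- Formulas Fm(C,D) of ∈_J-Logic. -/
inductive Fm : Type
  | pvar : ℕ → Fm
  | pconst : ℕ → Fm
  | imp : Fm → Fm → Fm
  | neg : Fm → Fm
  | ideq : Fm → Fm → Fm            -- φ ≡ ψ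
  | ref : Fm → Fm → Fm             -- φ < ψ
  | teq : Tm → Tm → Fm             -- s ≡ t
  | tle : Tm → Tm → Fm             -- s ≤ t
  | isTrue : Fm → Fm               -- φ : true
  | isFalse : Fm → Fm              -- φ : false
  | box : Fm → Fm                  -- □φ
  | just : Fm → Tm → Fm            -- φ : t
  | fAll : ℕ → Fm → Fm             -- ∀x.φ
  | jAll : ℕ → Fm → Fm             -- ⋀u.φ
  deriving DecidableEq

/-- variables of a term -/
def Tm.vars : Tm → Finset ℕ
  | .var u => {u}
  | .const _ => ∅
  | .app s t => s.vars ∪ t.vars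
  | .plus s t => s.vars ∪ t.vars

/-- constants of a term -/
def Tm.consts : Tm → Finset ℕ
  | .var _ => ∅
  | .const c => {c}
  | .app s t => s.consts ∪ t.consts
  | .plus s t => s.consts ∪ t.consts

/-- free propositional variables -/
def Fm.fvarP : Fm → Finset ℕ
  | .pvar x => {x}
  | .pconst _ => ∅
  | .imp φ ψ => φ.fvarP ∪ ψ.fvarP
  | .neg φ => φ.fvarP
  | .ideq φ ψ => φ.fvarP ∪ ψ.fvarP
  | .ref φ ψ => φ.fvarP ∪ ψ.fvarP
  | .teq _ _ => ∅
  | .tle _ _ => ∅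
  | .isTrue φ => φ.fvarP
  | .isFalse φ => φ.fvarP
  | .box φ => φ.fvarP
  | .just φ _ => φ.fvarP
  | .fAll x φ => φ.fvarP.erase x
  | .jAll _ φ => φ.fvarP

/-- free justification variables -/
def Fm.fvarJ : Fm → Finset ℕ
  | .pvar _ => ∅
  | .pconst _ => ∅
  | .imp φ ψ => φ.fvarJ ∪ ψ.fvarJ
  | .neg φ => φ.fvarJ
  | .ideq φ ψ => φ.fvarJ ∪ ψ.fvarJ
  | .ref φ ψ => φ.fvarJ ∪ ψ.fvarJ
  | .teq s t => s.vars ∪ t.vars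
  | .tle s t => s.vars ∪ t.vars
  | .isTrue φ => φ.fvarJ
  | .isFalse φ => φ.fvarJ
  | .box φ => φ.fvarJ
  | .just φ t => φ.fvarJ ∪ t.vars
  | .fAll _ φ => φ.fvarJ
  | .jAll u φ => φ.fvarJ.erase u

/-- propositional constants occurring in a formula -/
def Fm.pconsts : Fm → Finset ℕ
  | .pvar _ => ∅
  | .pconst d => {d}
  | .imp φ ψ => φ.pconsts ∪ ψ.pconsts
  | .neg φ => φ.pconsts
  | .ideq φ ψ => φ.pconsts ∪ ψ.pconsts
  | .ref φ ψ => φ.pconsts ∪ ψ.pconsts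
  | .teq _ _ => ∅
  | .tle _ _ => ∅
  | .isTrue φ => φ.pconsts
  | .isFalse φ => φ.pconsts
  | .box φ => φ.pconsts
  | .just φ _ => φ.pconsts
  | .fAll _ φ => φ.pconsts
  | .jAll _ φ => φ.pconsts

/-- justification constants occurring in a formula -/
def Fm.jconsts : Fm → Finset ℕ
  | .pvar _ => ∅
  | .pconst _ => ∅
  | .imp φ ψ => φ.jconsts ∪ ψ.jconsts
  | .neg φ => φ.jconsts
  | .ideq φ ψ => φ.jconsts ∪ ψ.jconsts
  | .ref φ ψ => φ.jconsts ∪ ψ.jconsts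
  | .teq s t => s.consts ∪ t.consts
  | .tle s t => s.consts ∪ t.consts
  | .isTrue φ => φ.jconsts
  | .isFalse φ => φ.jconsts
  | .box φ => φ.jconsts
  | .just φ t => φ.jconsts ∪ t.consts
  | .fAll _ φ => φ.jconsts
  | .jAll _ φ => φ.jconsts

/-- all propositional variables (free or bound) -/
def Fm.varP : Fm → Finset ℕ
  | .pvar x => {x}
  | .pconst _ => ∅
  | .imp φ ψ => φ.varP ∪ ψ.varP
  | .neg φ => φ.varP
  | .ideq φ ψ => φ.varP ∪ ψ.varP
  | .ref φ ψ => φ.varP ∪ ψ.varP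
  | .teq _ _ => ∅
  | .tle _ _ => ∅
  | .isTrue φ => φ.varP
  | .isFalse φ => φ.varP
  | .box φ => φ.varP
  | .just φ _ => φ.varP
  | .fAll x φ => insert x φ.varP
  | .jAll _ φ => φ.varP

/-- all justification variables (free or bound) -/
def Fm.varJ : Fm → Finset ℕ
  | .pvar _ => ∅
  | .pconst _ => ∅
  | .imp φ ψ => φ.varJ ∪ ψ.varJ
  | .neg φ => φ.varJ
  | .ideq φ ψ => φ.varJ ∪ ψ.varJ
  | .ref φ ψ => φ.varJ ∪ ψ.varJ
  | .teq s t => s.vars ∪ t.vars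
  | .tle s t => s.vars ∪ t.vars
  | .isTrue φ => φ.varJ
  | .isFalse φ => φ.varJ
  | .box φ => φ.varJ
  | .just φ t => φ.varJ ∪ t.vars
  | .fAll _ φ => φ.varJ
  | .jAll u φ => insert u φ.varJ

/-- A substitution: maps propositional variables/constants to formulas and
justification variables/constants to terms. -/
structure Subst where
  pv : ℕ → Fm
  jv : ℕ → Tm
  pc : ℕ → Fm
  jc : ℕ → Tm

/-- the identity substitution ε -/
def Subst.id : Subst := ⟨Fm.pvar, Tm.var, Fm.pconst, Tm.const⟩

def Subst.updP (σ : Subst) (x : ℕ) (e : Fm) : Subst :=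
  { σ with pv := Function.update σ.pv x e }

def Subst.updJ (σ : Subst) (u : ℕ) (t : Tm) : Subst :=
  { σ with jv := Function.update σ.jv u t }

def Subst.updPC (σ : Subst) (d : ℕ) (e : Fm) : Subst :=
  { σ with pc := Function.update σ.pc d e }

def Subst.updJC (σ : Subst) (c : ℕ) (t : Tm) : Subst :=
  { σ with jc := Function.update σ.jc c t }

/-- a substitution restricted to variables (identity on constants) -/
def Subst.IdOnConsts (σ : Subst) : Prop := σ.pc = Fm.pconst ∧ σ.jc = Tm.const

/-- substitution applied to a term -/
def Tm.subst : Tm → Subst → Tm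
  | .var u, σ => σ.jv u
  | .const c, σ => σ.jc c
  | .app s t, σ => .app (s.subst σ) (t.subst σ)
  | .plus s t, σ => .plus (s.subst σ) (t.subst σ)

/-- the propositional variable forced by σ w.r.t. a quantified formula:
the least variable greater than all free propositional variables of the images
under σ of the free symbols of the formula -/
def pForced (σ : Subst) (φ : Fm) : ℕ :=
  ((φ.fvarP.biUnion fun w => (σ.pv w).fvarP) ∪
   (φ.pconsts.biUnion fun w => (σ.pc w).fvarP)).sup Nat.succ

/-- the justification variable forced by σ w.r.t. a quantified formula -/
def jForced (σ : Subst) (φ : Fm) : ℕ :=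
  ((φ.fvarP.biUnion fun w => (σ.pv w).fvarJ) ∪
   (φ.pconsts.biUnion fun w => (σ.pc w).fvarJ) ∪
   (φ.fvarJ.biUnion fun w => (σ.jv w).vars) ∪
   (φ.jconsts.biUnion fun w => (σ.jc w).vars)).sup Nat.succ

/-- capture-avoiding substitution on formulas, renaming bound variables
canonically to the forced fresh variable -/
def Fm.subst : Fm → Subst → Fm
  | .pvar x, σ => σ.pv x
  | .pconst d, σ => σ.pc d
  | .imp φ ψ, σ => .imp (φ.subst σ) (ψ.subst σ)
  | .neg φ, σ => .neg (φ.subst σ)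
  | .ideq φ ψ, σ => .ideq (φ.subst σ) (ψ.subst σ)
  | .ref φ ψ, σ => .ref (φ.subst σ) (ψ.subst σ)
  | .teq s t, σ => .teq (s.subst σ) (t.subst σ)
  | .tle s t, σ => .tle (s.subst σ) (t.subst σ)
  | .isTrue φ, σ => .isTrue (φ.subst σ)
  | .isFalse φ, σ => .isFalse (φ.subst σ)
  | .box φ, σ => .box (φ.subst σ)
  | .just φ t, σ => .just (φ.subst σ) (t.subst σ)
  | .fAll x φ, σ =>
      let y := pForced σ (.fAll x φ)
      .fAll y (φ.subst (σ.updP x (.pvar y)))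
  | .jAll u φ, σ =>
      let v := jForced σ (.jAll u φ)
      .jAll v (φ.subst (σ.updJ u (.var v)))

/-- single-point substitution [x := ψ] for a propositional variable -/
def Fm.subst1P (φ : Fm) (x : ℕ) (ψ : Fm) : Fm := φ.subst (Subst.id.updP x ψ)

/-- single-point substitution [u := t] for a justification variable -/
def Fm.subst1J (φ : Fm) (u : ℕ) (t : Tm) : Fm := φ.subst (Subst.id.updJ u t)

/-- composition of substitutions: (σ ∘ τ)(x) = σ(x)[τ] -/
def Subst.comp (σ τ : Subst) : Subst :=
  ⟨fun x => (σ.pv x).subst τ, fun u => (σ.jv u).subst τ,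
   fun d => (σ.pc d).subst τ, fun c => (σ.jc c).subst τ⟩

/-- alpha-congruence: the smallest equivalence relation compatible with all
connectives and identifying formulas differing only in bound variables -/
inductive Alpha : Fm → Fm → Prop
  | refl (φ) : Alpha φ φ
  | symm : Alpha φ ψ → Alpha ψ φ
  | trans : Alpha φ ψ → Alpha ψ χ → Alpha φ χ
  | imp : Alpha φ₁ ψ₁ → Alpha φ₂ ψ₂ → Alpha (.imp φ₁ φ₂) (.imp ψ₁ ψ₂)
  | ideq : Alpha φ₁ ψ₁ → Alpha φ₂ ψ₂ → Alpha (.ideq φ₁ φ₂) (.ideq ψ₁ ψ₂)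
  | ref : Alpha φ₁ ψ₁ → Alpha φ₂ ψ₂ → Alpha (.ref φ₁ φ₂) (.ref ψ₁ ψ₂)
  | neg : Alpha φ ψ → Alpha (.neg φ) (.neg ψ)
  | isTrue : Alpha φ ψ → Alpha (.isTrue φ) (.isTrue ψ)
  | isFalse : Alpha φ ψ → Alpha (.isFalse φ) (.isFalse ψ)
  | box : Alpha φ ψ → Alpha (.box φ) (.box ψ)
  | just (t) : Alpha φ ψ → Alpha (.just φ t) (.just ψ t)
  | jAll : Alpha φ (ψ.subst1J v (.var u)) → (u ≠ v → u ∉ ψ.fvarJ) →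
      Alpha (.jAll u φ) (.jAll v ψ)
  | fAll : Alpha φ (ψ.subst1P y (.pvar x)) → (x ≠ y → x ∉ ψ.fvarP) →
      Alpha (.fAll x φ) (.fAll y ψ)

/-- syntactical reference φ ≺ ψ -/
def Sref (φ ψ : Fm) : Prop :=
  ∃ (x : ℕ) (ψ' : Fm), ψ' ≠ .pvar x ∧ x ∈ ψ'.fvarP ∧ Alpha (ψ'.subst1P x φ) ψ

/-! ## derived connectives -/

def Fm.and (φ ψ : Fm) : Fm := .neg (.imp φ (.neg ψ))
def Fm.iff (φ ψ : Fm) : Fm := (Fm.imp φ ψ).and (Fm.imp ψ φ)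
def Fm.jEx (u : ℕ) (φ : Fm) : Fm := .neg (.jAll u (.neg φ))
def Fm.fEx (x : ℕ) (φ : Fm) : Fm := .neg (.fAll x (.neg φ))

/-- conjunction of a list of formulas -/
def bigAnd : List Fm → Fm
  | [] => .imp (.pvar 0) (.pvar 0)
  | [φ] => φ
  | φ :: ψ :: rest => Fm.and φ (bigAnd (ψ :: rest))

/-- the formula σ ≡_φ σ' : conjunction of σ(x) ≡ σ'(x) over the free variables
of φ (in the order of the underlying well-orderings) -/
def eqOnF (σ σ' : Subst) (φ : Fm) : Fm :=
  bigAnd (((φ.fvarP.sort (· ≤ ·)).map fun x => Fm.ideq (σ.pv x) (σ'.pv x)) ++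
          ((φ.fvarJ.sort (· ≤ ·)).map fun u => Fm.teq (σ.jv u) (σ'.jv u)))

/-- the formula σ ≡_t σ' for a term t -/
def eqOnT (σ σ' : Subst) (t : Tm) : Fm :=
  bigAnd ((t.vars.sort (· ≤ ·)).map fun u => Fm.teq (σ.jv u) (σ'.jv u))

/-! ## the Hilbert system Ax -/

/-- boolean evaluation treating formulas other than →, ¬ as atoms -/
def Fm.evalB (v : Fm → Bool) : Fm → Bool
  | .imp φ ψ => !(φ.evalB v) || ψ.evalB v
  | .neg φ => !(φ.evalB v)
  | φ => v φ

/-- propositional tautology (a sufficient set of tautologies) -/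
def Taut (φ : Fm) : Prop := ∀ v : Fm → Bool, φ.evalB v = true

/-- the axiom system Ax of ∈_J-Logic (Definition 3.1) -/
inductive Ax : Fm → Prop
  | taut : Taut φ → Ax φ
  | tarski (φ) : Ax ((Fm.isTrue φ).iff φ)
  | falsity (φ) : Ax ((Fm.isFalse φ).iff (.neg φ))
  | appl (φ ψ s t) :
      Ax (.imp (.just (.imp φ ψ) s) (.imp (.just φ t) (.just ψ (.app s t))))
  | weak1 (φ s t) : Ax (.imp (.just φ s) (.just φ (.plus s t)))
  | weak2 (φ s t) : Ax (.imp (.just φ t) (.just φ (.plus s t)))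
  | necJust (φ u) : u ∉ φ.fvarJ →
      Ax ((Fm.box φ).iff (Fm.jEx u (.just φ (.var u))))
  | boxT (φ) : Ax (.imp (.box φ) φ)
  | refAx : Sref φ ψ → Ax (.ref φ ψ)
  | refTrans (φ ψ χ) : Ax (.imp (.ref φ ψ) (.imp (.ref ψ χ) (.ref φ χ)))
  | alphaAx : Alpha φ ψ → Ax (.ideq φ ψ)
  | eqImp (φ ψ) : Ax (.imp (.ideq φ ψ) (.imp φ ψ))
  | substP (σ σ' φ) : Ax (.imp (eqOnF σ σ' φ) (.ideq (φ.subst σ) (φ.subst σ')))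
  | jExInst (φ u t) : Ax (.imp (φ.subst1J u t) (Fm.jEx u φ))
  | jAllInst (φ u t) : Ax (.imp (.jAll u φ) (φ.subst1J u t))
  | jDistrib (φ ψ u) :
      Ax (.imp (.jAll u (.imp ψ φ)) (.imp (.jAll u ψ) (.jAll u φ)))
  | jVac (φ ψ u) : u ∉ ψ.fvarJ →
      Ax (.imp (.jAll u (.imp ψ φ)) (.imp ψ (.jAll u φ)))
  | pExInst (φ x ψ) : Ax (.imp (φ.subst1P x ψ) (Fm.fEx x φ))
  | pAllInst (φ x ψ) : Ax (.imp (.fAll x φ) (φ.subst1P x ψ))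
  | pDistrib (φ ψ x) :
      Ax (.imp (.fAll x (.imp ψ φ)) (.imp (.fAll x ψ) (.fAll x φ)))
  | pVac (φ ψ x) : x ∉ ψ.fvarP →
      Ax (.imp (.fAll x (.imp ψ φ)) (.imp ψ (.fAll x φ)))
  | leDef (s t x) :
      Ax ((Fm.tle s t).iff
        (.fAll x (.imp (.just (.pvar x) s) (.just (.pvar x) t))))
  | ext (s t) : Ax ((Fm.teq s t).iff ((Fm.tle s t).and (Fm.tle t s)))
  | substT (σ σ' t) : Ax (.imp (eqOnT σ σ' t) (.teq (t.subst σ) (t.subst σ')))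
  | genJ : Ax φ → u ∈ φ.fvarJ → Ax (.jAll u φ)
  | genP : Ax φ → x ∈ φ.fvarP → Ax (.fAll x φ)

/-- derivability from Φ in the Hilbert system Ax with Modus Ponens -/
inductive Deriv (Φ : Set Fm) : Fm → Prop
  | hyp : φ ∈ Φ → Deriv Φ φ
  | ax : Ax φ → Deriv Φ φ
  | mp : Deriv Φ (.imp φ ψ) → Deriv Φ φ → Deriv Φ ψ

def Consistent (Φ : Set Fm) : Prop := ¬ ∃ φ, Deriv Φ φ ∧ Deriv Φ (.neg φ)

def MaxConsistent (Φ : Set Fm) : Prop :=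
  Consistent Φ ∧ ∀ ψ, ψ ∉ Φ → ¬ Consistent (insert ψ Φ)

/-- Henkin set (Definition 4.4) -/
def Henkin (Φ : Set Fm) : Prop :=
  MaxConsistent Φ ∧
  (∀ u φ, Deriv Φ (.jAll u φ) ↔ ∀ c : ℕ, Deriv Φ (φ.subst1J u (.const c))) ∧
  (∀ x φ, Deriv Φ (.fAll x φ) ↔ ∀ d : ℕ, Deriv Φ (φ.subst1P x (.pconst d)))

/-! ## semantics -/

/-- an assignment of propositions to propositional variables and indexes to
justification variables -/
structure Assign (P I : Type) where
  gp : ℕ → P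
  gj : ℕ → I

def Assign.updP {P I : Type} (γ : Assign P I) (x : ℕ) (m : P) : Assign P I :=
  ⟨Function.update γ.gp x m, γ.gj⟩

def Assign.updJ {P I : Type} (γ : Assign P I) (u : ℕ) (l : I) : Assign P I :=
  ⟨γ.gp, Function.update γ.gj u l⟩

/-- a model of ∈_J-Logic (Definition 4.1) -/
structure JModel where
  P : Type                                  -- the propositional universe M
  I : Type                                  -- the set L of indexes
  TRUE : Set P
  FALSE : Set P
  NEC : Set P
  REASON : I → Set P
  ref : P → P → Prop                        -- the reference relation <^M
  plusI : I → I → I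
  dotI : I → I → I
  leI : I → I → Prop
  G : Fm → Assign P I → P                   -- Gamma-function on formulas
  GT : Tm → Assign P I → I                  -- Gamma-function on terms
  cover : TRUE ∪ FALSE = Set.univ
  disj : TRUE ∩ FALSE = ∅
  nec_sub : NEC ⊆ TRUE
  nec_union : NEC = ⋃ l, REASON l
  le_iso : ∀ l k, leI l k ↔ REASON l ⊆ REASON k
  reason_inj : Function.Injective REASON
  ref_trans : Transitive ref
  -- structure conditions
  ep : ∀ x γ, G (.pvar x) γ = γ.gp x
  epT : ∀ u γ, GT (.var u) γ = γ.gj u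
  cp : ∀ φ γ γ', (∀ x ∈ Fm.fvarP φ, γ.gp x = Assign.gp γ' x) →
      (∀ u ∈ Fm.fvarJ φ, γ.gj u = Assign.gj γ' u) → G φ γ = G φ γ'
  cpT : ∀ t γ γ', (∀ u ∈ Tm.vars t, γ.gj u = Assign.gj γ' u) → GT t γ = GT t γ'
  sp : ∀ φ (σ : Subst) γ, σ.IdOnConsts →
      G (φ.subst σ) γ = G φ ⟨fun x => G (σ.pv x) γ, fun u => GT (σ.jv u) γ⟩
  spT : ∀ t (σ : Subst) γ, σ.IdOnConsts →
      GT (t.subst σ) γ = GT t ⟨fun x => G (σ.pv x) γ, fun u => GT (σ.jv u) γ⟩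
  rp : ∀ φ ψ γ, Sref φ ψ → ref (G φ γ) (G ψ γ)
  hp_plus : ∀ s t γ, GT (.plus s t) γ = plusI (GT s γ) (GT t γ)
  hp_dot : ∀ s t γ, GT (.app s t) γ = dotI (GT s γ) (GT t γ)
  -- truth conditions
  t_imp : ∀ φ ψ γ, (G (.imp φ ψ) γ ∈ TRUE ↔ (G φ γ ∈ FALSE ∨ G ψ γ ∈ TRUE))
  t_neg : ∀ φ γ, (G (.neg φ) γ ∈ TRUE ↔ G φ γ ∉ TRUE)
  t_true : ∀ φ γ, (G (.isTrue φ) γ ∈ TRUE ↔ G φ γ ∈ TRUE)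
  t_false : ∀ φ γ, (G (.isFalse φ) γ ∈ TRUE ↔ G φ γ ∈ FALSE)
  t_ideq : ∀ φ ψ γ, (G (.ideq φ ψ) γ ∈ TRUE ↔ G φ γ = G ψ γ)
  t_ref : ∀ φ ψ γ, (G (.ref φ ψ) γ ∈ TRUE ↔ ref (G φ γ) (G ψ γ))
  t_teq : ∀ s t γ, (G (.teq s t) γ ∈ TRUE ↔ GT s γ = GT t γ)
  t_tle : ∀ s t γ, (G (.tle s t) γ ∈ TRUE ↔ leI (GT s γ) (GT t γ))
  t_box : ∀ φ γ, (G (.box φ) γ ∈ TRUE ↔ G φ γ ∈ NEC)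
  t_just : ∀ φ t γ, (G (.just φ t) γ ∈ TRUE ↔ G φ γ ∈ REASON (GT t γ))
  t_app : ∀ φ ψ s t γ, G (.imp φ ψ) γ ∈ REASON (GT s γ) →
      G φ γ ∈ REASON (GT t γ) → G ψ γ ∈ REASON (GT (.app s t) γ)
  t_plusJ : ∀ φ s t γ, G φ γ ∈ REASON (GT s γ) ∪ REASON (GT t γ) →
      G φ γ ∈ REASON (GT (.plus s t) γ)
  t_jAll : ∀ u φ γ, (G (.jAll u φ) γ ∈ TRUE ↔ ∀ l, G φ (γ.updJ u l) ∈ TRUE)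
  t_fAll : ∀ x φ γ, (G (.fAll x φ) γ ∈ TRUE ↔ ∀ m, G φ (γ.updP x m) ∈ TRUE)

/-- satisfaction -/
def JModel.Sat (M : JModel) (γ : Assign M.P M.I) (φ : Fm) : Prop :=
  M.G φ γ ∈ M.TRUE

/-- logical consequence over all models -/
def Conseq (Φ : Set Fm) (φ : Fm) : Prop :=
  ∀ (M : JModel) (γ : Assign M.P M.I), (∀ ψ ∈ Φ, M.Sat γ ψ) → M.Sat γ φ

/-! ## S4 extensions -/

/-- the axioms of Ax + (4) -/
inductive Ax4 : Fm → Prop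
  | base : Ax φ → Ax4 φ
  | four (φ) : Ax4 (.imp (.box φ) (.box (.box φ)))

/-- derivability in Ax + (4) + (AxNec): MP plus Axiom Necessitation -/
inductive Deriv4 (Φ : Set Fm) : Fm → Prop
  | hyp : φ ∈ Φ → Deriv4 Φ φ
  | ax : Ax4 φ → Deriv4 Φ φ
  | axnec : Ax4 φ → Deriv4 Φ (.box φ)
  | mp : Deriv4 Φ (.imp φ ψ) → Deriv4 Φ φ → Deriv4 Φ ψ

/-- truth condition (4) -/
def Cond4 (M : JModel) : Prop :=
  ∀ φ γ, M.Sat γ (.box φ) → M.Sat γ (.box (.box φ))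

/-- truth condition (AxNec) -/
def CondAxNec (M : JModel) : Prop :=
  ∀ φ γ, Ax4 φ → M.Sat γ (.box φ)

/-! ## basic modal language and S4 -/

inductive MFm : Type
  | var : ℕ → MFm
  | imp : MFm → MFm → MFm
  | neg : MFm → MFm
  | box : MFm → MFm
  deriving DecidableEq

def MFm.toFm : MFm → Fm
  | .var x => .pvar x
  | .imp a b => .imp a.toFm b.toFm
  | .neg a => .neg a.toFm
  | .box a => .box a.toFm

def MFm.evalB (v : MFm → Bool) : MFm → Bool
  | .imp a b => !(a.evalB v) || b.evalB v
  | .neg a => !(a.evalB v)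
  | a => v a

def MTaut (a : MFm) : Prop := ∀ v, a.evalB v = true

/-- the modal logic S4 -/
inductive S4 : MFm → Prop
  | taut : MTaut a → S4 a
  | axK (a b) : S4 (.imp (.box (.imp a b)) (.imp (.box a) (.box b)))
  | axT (a) : S4 (.imp (.box a) a)
  | ax4 (a) : S4 (.imp (.box a) (.box (.box a)))
  | mp : S4 (.imp a b) → S4 a → S4 b
  | nec : S4 a → S4 (.box a)

/-- an S4 frame: reflexive and transitive accessibility -/
structure S4Frame where
  W : Type
  R : W → W → Prop
  refl : Reflexive R
  trans : Transitive R

/-- Kripke satisfaction -/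
def KSat (F : S4Frame) (g : F.W → ℕ → Prop) : F.W → MFm → Prop
  | w, .var x => g w x
  | w, .imp a b => KSat F g w a → KSat F g w b
  | w, .neg a => ¬ KSat F g w a
  | w, .box a => ∀ w', F.R w w' → KSat F g w' a

end EJ
namespace EJ

/-! ### renaming substitutions -/

def ren (f g : ℕ → ℕ) : Subst :=
  ⟨fun x => .pvar (f x), fun u => .var (g u), Fm.pconst, Tm.const⟩

@[simp] lemma ren_pv (f g : ℕ → ℕ) (x : ℕ) : (ren f g).pv x = .pvar (f x) := rfl
@[simp] lemma ren_jv (f g : ℕ → ℕ) (u : ℕ) : (ren f g).jv u = .var (g u) := rfl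
@[simp] lemma ren_pc (f g : ℕ → ℕ) (d : ℕ) : (ren f g).pc d = .pconst d := rfl
@[simp] lemma ren_jc (f g : ℕ → ℕ) (c : ℕ) : (ren f g).jc c = .const c := rfl

lemma id_eq_ren : Subst.id = ren id id := rfl

lemma ren_updP (f g : ℕ → ℕ) (x y : ℕ) :
    (ren f g).updP x (.pvar y) = ren (Function.update f x y) g := by
  unfold ren Subst.updP
  congr 1
  funext w
  by_cases h : w = x <;> simp [Function.update, h]

lemma ren_updJ (f g : ℕ → ℕ) (u v : ℕ) :
    (ren f g).updJ u (.var v) = ren f (Function.update g u v) := by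
  unfold ren Subst.updJ
  congr 1
  funext w
  by_cases h : w = u <;> simp [Function.update, h]

/-! ### terms under renamings -/

lemma Tm.subst_ren_congr (t : Tm) (f g f' g' : ℕ → ℕ)
    (hg : ∀ u ∈ t.vars, g u = g' u) :
    t.subst (ren f g) = t.subst (ren f' g') := by
  induction t with
  | var u => simp [Tm.subst, hg u (by simp [Tm.vars])]
  | const c => simp [Tm.subst]
  | app s t ihs iht =>
    simp only [Tm.subst]
    rw [ihs (fun u hu => hg u (by simp [Tm.vars, hu])),
        iht (fun u hu => hg u (by simp [Tm.vars, hu]))]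
  | plus s t ihs iht =>
    simp only [Tm.subst]
    rw [ihs (fun u hu => hg u (by simp [Tm.vars, hu])),
        iht (fun u hu => hg u (by simp [Tm.vars, hu]))]

lemma Tm.vars_subst_ren (t : Tm) (f g : ℕ → ℕ) :
    (t.subst (ren f g)).vars = t.vars.image g := by
  induction t with
  | var u => simp [Tm.subst, Tm.vars]
  | const c => simp [Tm.subst, Tm.vars]
  | app s t ihs iht => simp [Tm.subst, Tm.vars, ihs, iht, Finset.image_union]
  | plus s t ihs iht => simp [Tm.subst, Tm.vars, ihs, iht, Finset.image_union]

lemma Tm.subst_ren_comp (t : Tm) (f g f' g' : ℕ → ℕ) :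
    (t.subst (ren f g)).subst (ren f' g') = t.subst (ren (f' ∘ f) (g' ∘ g)) := by
  induction t with
  | var u => simp [Tm.subst]
  | const c => simp [Tm.subst]
  | app s t ihs iht => simp [Tm.subst, ihs, iht]
  | plus s t ihs iht => simp [Tm.subst, ihs, iht]

lemma Tm.subst_ren_id (t : Tm) (f g : ℕ → ℕ) (hg : ∀ u ∈ t.vars, g u = u) :
    t.subst (ren f g) = t := by
  induction t with
  | var u => simp [Tm.subst, hg u (by simp [Tm.vars])]
  | const c => simp [Tm.subst]
  | app s t ihs iht =>
    simp only [Tm.subst]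
    rw [ihs (fun u hu => hg u (by simp [Tm.vars, hu])),
        iht (fun u hu => hg u (by simp [Tm.vars, hu]))]
  | plus s t ihs iht =>
    simp only [Tm.subst]
    rw [ihs (fun u hu => hg u (by simp [Tm.vars, hu])),
        iht (fun u hu => hg u (by simp [Tm.vars, hu]))]

lemma Tm.subst_idlike (t : Tm) (σ : Subst) (h1 : σ.jv = Tm.var) (h2 : σ.jc = Tm.const) :
    t.subst σ = t := by
  induction t with
  | var u => simp [Tm.subst, h1]
  | const c => simp [Tm.subst, h2]
  | app s t ihs iht => simp [Tm.subst, ihs, iht]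
  | plus s t ihs iht => simp [Tm.subst, ihs, iht]

/-! ### forced variables under renamings -/

lemma pForced_ren (f g : ℕ → ℕ) (φ : Fm) :
    pForced (ren f g) φ = (φ.fvarP.image f).sup Nat.succ := by
  unfold pForced
  congr 1
  ext b
  simp [Fm.fvarP, Fm.fvarJ, Tm.vars, eq_comm]

lemma jForced_ren (f g : ℕ → ℕ) (φ : Fm) :
    jForced (ren f g) φ = (φ.fvarJ.image g).sup Nat.succ := by
  unfold jForced
  congr 1
  ext b
  simp [Fm.fvarP, Fm.fvarJ, Tm.vars, eq_comm]

lemma lt_sup_succ {s : Finset ℕ} {b : ℕ} (hb : b ∈ s) : b < s.sup Nat.succ :=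
  Nat.lt_of_succ_le (Finset.le_sup hb)

/-- The key Finset computation at binders. -/
lemma image_update_erase (s : Finset ℕ) (x : ℕ) (f : ℕ → ℕ) (y : ℕ)
    (hy : ∀ b ∈ s.erase x, f b < y) :
    (s.image (Function.update f x y)).erase y = (s.erase x).image f := by
  ext b
  simp only [Finset.mem_erase, Finset.mem_image]
  constructor
  · rintro ⟨hby, w, hw, hwb⟩
    by_cases hwx : w = x
    · subst hwx
      rw [Function.update_self] at hwb
      exact (hby hwb.symm).elim
    · rw [Function.update_of_ne hwx] at hwb
      exact ⟨w, ⟨hwx, hw⟩, hwb⟩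
  · rintro ⟨w, ⟨hwx, hw⟩, rfl⟩
    have hlt := hy w (Finset.mem_erase.mpr ⟨hwx, hw⟩)
    exact ⟨by omega, w, hw, Function.update_of_ne hwx _ _⟩
end EJ
namespace EJ

lemma Tm.subst_congr (t : Tm) (σ σ' : Subst)
    (hj : ∀ u ∈ t.vars, σ.jv u = σ'.jv u) (hjc : σ.jc = σ'.jc) :
    t.subst σ = t.subst σ' := by
  induction t with
  | var u => simpa [Tm.subst] using hj u (by simp [Tm.vars])
  | const c => simp [Tm.subst, hjc]
  | app s t ihs iht =>
    simp only [Tm.subst]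
    rw [ihs (fun u hu => hj u (by simp [Tm.vars, hu])),
        iht (fun u hu => hj u (by simp [Tm.vars, hu]))]
  | plus s t ihs iht =>
    simp only [Tm.subst]
    rw [ihs (fun u hu => hj u (by simp [Tm.vars, hu])),
        iht (fun u hu => hj u (by simp [Tm.vars, hu]))]

lemma pForced_congr {σ σ' : Subst} {φ : Fm}
    (hp : ∀ x ∈ φ.fvarP, σ.pv x = σ'.pv x) (hpc : σ.pc = σ'.pc) :
    pForced σ φ = pForced σ' φ := by
  unfold pForced
  congr 1
  have h1 : (φ.fvarP.biUnion fun w => (σ.pv w).fvarP)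
      = φ.fvarP.biUnion fun w => (σ'.pv w).fvarP :=
    Finset.biUnion_congr rfl (fun w hw => by rw [hp w hw])
  have h2 : (φ.pconsts.biUnion fun w => (σ.pc w).fvarP)
      = φ.pconsts.biUnion fun w => (σ'.pc w).fvarP :=
    Finset.biUnion_congr rfl (fun w _ => by rw [hpc])
  rw [h1, h2]

lemma jForced_congr {σ σ' : Subst} {φ : Fm}
    (hp : ∀ x ∈ φ.fvarP, σ.pv x = σ'.pv x)
    (hj : ∀ u ∈ φ.fvarJ, σ.jv u = σ'.jv u)
    (hpc : σ.pc = σ'.pc) (hjc : σ.jc = σ'.jc) :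
    jForced σ φ = jForced σ' φ := by
  unfold jForced
  congr 1
  have h1 : (φ.fvarP.biUnion fun w => (σ.pv w).fvarJ)
      = φ.fvarP.biUnion fun w => (σ'.pv w).fvarJ :=
    Finset.biUnion_congr rfl (fun w hw => by rw [hp w hw])
  have h2 : (φ.pconsts.biUnion fun w => (σ.pc w).fvarJ)
      = φ.pconsts.biUnion fun w => (σ'.pc w).fvarJ :=
    Finset.biUnion_congr rfl (fun w _ => by rw [hpc])
  have h3 : (φ.fvarJ.biUnion fun w => (σ.jv w).vars)
      = φ.fvarJ.biUnion fun w => (σ'.jv w).vars :=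
    Finset.biUnion_congr rfl (fun w hw => by rw [hj w hw])
  have h4 : (φ.jconsts.biUnion fun w => (σ.jc w).vars)
      = φ.jconsts.biUnion fun w => (σ'.jc w).vars :=
    Finset.biUnion_congr rfl (fun w _ => by rw [hjc])
  rw [h1, h2, h3, h4]

lemma Fm.subst_congr (φ : Fm) (σ σ' : Subst)
    (hp : ∀ x ∈ φ.fvarP, σ.pv x = σ'.pv x)
    (hj : ∀ u ∈ φ.fvarJ, σ.jv u = σ'.jv u)
    (hpc : σ.pc = σ'.pc) (hjc : σ.jc = σ'.jc) :
    φ.subst σ = φ.subst σ' := by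
  induction φ generalizing σ σ' with
  | pvar x => simpa [Fm.subst] using hp x (by simp [Fm.fvarP])
  | pconst d => simp [Fm.subst, hpc]
  | imp φ ψ ih1 ih2 =>
    simp only [Fm.subst]
    rw [ih1 _ _ (fun x hx => hp x (by simp [Fm.fvarP, hx]))
          (fun u hu => hj u (by simp [Fm.fvarJ, hu])) hpc hjc,
        ih2 _ _ (fun x hx => hp x (by simp [Fm.fvarP, hx]))
          (fun u hu => hj u (by simp [Fm.fvarJ, hu])) hpc hjc]
  | neg φ ih =>
    simp only [Fm.subst]
    rw [ih _ _ (fun x hx => hp x hx) (fun u hu => hj u hu) hpc hjc]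
  | ideq φ ψ ih1 ih2 =>
    simp only [Fm.subst]
    rw [ih1 _ _ (fun x hx => hp x (by simp [Fm.fvarP, hx]))
          (fun u hu => hj u (by simp [Fm.fvarJ, hu])) hpc hjc,
        ih2 _ _ (fun x hx => hp x (by simp [Fm.fvarP, hx]))
          (fun u hu => hj u (by simp [Fm.fvarJ, hu])) hpc hjc]
  | ref φ ψ ih1 ih2 =>
    simp only [Fm.subst]
    rw [ih1 _ _ (fun x hx => hp x (by simp [Fm.fvarP, hx]))
          (fun u hu => hj u (by simp [Fm.fvarJ, hu])) hpc hjc,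
        ih2 _ _ (fun x hx => hp x (by simp [Fm.fvarP, hx]))
          (fun u hu => hj u (by simp [Fm.fvarJ, hu])) hpc hjc]
  | teq s t =>
    simp only [Fm.subst]
    rw [Tm.subst_congr s _ _ (fun u hu => hj u (by simp [Fm.fvarJ, hu])) hjc,
        Tm.subst_congr t _ _ (fun u hu => hj u (by simp [Fm.fvarJ, hu])) hjc]
  | tle s t =>
    simp only [Fm.subst]
    rw [Tm.subst_congr s _ _ (fun u hu => hj u (by simp [Fm.fvarJ, hu])) hjc,
        Tm.subst_congr t _ _ (fun u hu => hj u (by simp [Fm.fvarJ, hu])) hjc]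
  | isTrue φ ih =>
    simp only [Fm.subst]
    rw [ih _ _ (fun x hx => hp x hx) (fun u hu => hj u hu) hpc hjc]
  | isFalse φ ih =>
    simp only [Fm.subst]
    rw [ih _ _ (fun x hx => hp x hx) (fun u hu => hj u hu) hpc hjc]
  | box φ ih =>
    simp only [Fm.subst]
    rw [ih _ _ (fun x hx => hp x hx) (fun u hu => hj u hu) hpc hjc]
  | just φ t ih =>
    simp only [Fm.subst]
    rw [ih _ _ (fun x hx => hp x hx) (fun u hu => hj u (by simp [Fm.fvarJ, hu])) hpc hjc,
        Tm.subst_congr t _ _ (fun u hu => hj u (by simp [Fm.fvarJ, hu])) hjc]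
  | fAll x φ ih =>
    have hf : pForced σ (.fAll x φ) = pForced σ' (.fAll x φ) := pForced_congr hp hpc
    simp only [Fm.subst]
    rw [hf]
    congr 1
    apply ih
    · intro w hw
      by_cases hwx : w = x
      · subst hwx; simp [Subst.updP]
      · simp only [Subst.updP, Function.update_of_ne hwx]
        exact hp w (by simp [Fm.fvarP, Finset.mem_erase, hwx, hw])
    · intro u hu; exact hj u hu
    · exact hpc
    · exact hjc
  | jAll u φ ih =>
    have hf : jForced σ (.jAll u φ) = jForced σ' (.jAll u φ) :=
      jForced_congr hp hj hpc hjc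
    simp only [Fm.subst]
    rw [hf]
    congr 1
    apply ih
    · intro w hw; exact hp w hw
    · intro w hw
      by_cases hwu : w = u
      · subst hwu; simp [Subst.updJ]
      · simp only [Subst.updJ, Function.update_of_ne hwu]
        exact hj w (by simp [Fm.fvarJ, Finset.mem_erase, hwu, hw])
    · exact hpc
    · exact hjc

end EJ
namespace EJ

lemma fvarP_subst_ren (φ : Fm) (f g : ℕ → ℕ) :
    (φ.subst (ren f g)).fvarP = φ.fvarP.image f := by
  induction φ generalizing f g with
  | pvar x => simp [Fm.subst, Fm.fvarP]
  | pconst d => simp [Fm.subst, Fm.fvarP]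
  | imp φ ψ ih1 ih2 => simp [Fm.subst, Fm.fvarP, ih1, ih2, Finset.image_union]
  | neg φ ih => simp [Fm.subst, Fm.fvarP, ih]
  | ideq φ ψ ih1 ih2 => simp [Fm.subst, Fm.fvarP, ih1, ih2, Finset.image_union]
  | ref φ ψ ih1 ih2 => simp [Fm.subst, Fm.fvarP, ih1, ih2, Finset.image_union]
  | teq s t => simp [Fm.subst, Fm.fvarP]
  | tle s t => simp [Fm.subst, Fm.fvarP]
  | isTrue φ ih => simp [Fm.subst, Fm.fvarP, ih]
  | isFalse φ ih => simp [Fm.subst, Fm.fvarP, ih]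
  | box φ ih => simp [Fm.subst, Fm.fvarP, ih]
  | just φ t ih => simp [Fm.subst, Fm.fvarP, ih]
  | fAll x χ ih =>
    simp only [Fm.subst, ren_updP]
    show ((χ.subst (ren (Function.update f x (pForced (ren f g) (.fAll x χ))) g)).fvarP).erase
        (pForced (ren f g) (.fAll x χ)) = (Fm.fvarP (.fAll x χ)).image f
    rw [ih]
    have : Fm.fvarP (.fAll x χ) = χ.fvarP.erase x := rfl
    rw [this]
    apply image_update_erase
    intro b hb
    rw [pForced_ren]
    exact lt_sup_succ (Finset.mem_image_of_mem f (by rw [this]; exact hb))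
  | jAll u χ ih =>
    simp only [Fm.subst, ren_updJ]
    show (χ.subst (ren f (Function.update g u (jForced (ren f g) (.jAll u χ))))).fvarP
        = (Fm.fvarP (.jAll u χ)).image f
    rw [ih]
    rfl

lemma fvarJ_subst_ren (φ : Fm) (f g : ℕ → ℕ) :
    (φ.subst (ren f g)).fvarJ = φ.fvarJ.image g := by
  induction φ generalizing f g with
  | pvar x => simp [Fm.subst, Fm.fvarJ]
  | pconst d => simp [Fm.subst, Fm.fvarJ]
  | imp φ ψ ih1 ih2 => simp [Fm.subst, Fm.fvarJ, ih1, ih2, Finset.image_union]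
  | neg φ ih => simp [Fm.subst, Fm.fvarJ, ih]
  | ideq φ ψ ih1 ih2 => simp [Fm.subst, Fm.fvarJ, ih1, ih2, Finset.image_union]
  | ref φ ψ ih1 ih2 => simp [Fm.subst, Fm.fvarJ, ih1, ih2, Finset.image_union]
  | teq s t => simp [Fm.subst, Fm.fvarJ, Tm.vars_subst_ren, Finset.image_union]
  | tle s t => simp [Fm.subst, Fm.fvarJ, Tm.vars_subst_ren, Finset.image_union]
  | isTrue φ ih => simp [Fm.subst, Fm.fvarJ, ih]
  | isFalse φ ih => simp [Fm.subst, Fm.fvarJ, ih]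
  | box φ ih => simp [Fm.subst, Fm.fvarJ, ih]
  | just φ t ih =>
    simp [Fm.subst, Fm.fvarJ, ih, Tm.vars_subst_ren, Finset.image_union]
  | fAll x χ ih =>
    simp only [Fm.subst, ren_updP]
    show (χ.subst (ren (Function.update f x (pForced (ren f g) (.fAll x χ))) g)).fvarJ
        = (Fm.fvarJ (.fAll x χ)).image g
    rw [ih]
    rfl
  | jAll u χ ih =>
    simp only [Fm.subst, ren_updJ]
    show ((χ.subst (ren f (Function.update g u (jForced (ren f g) (.jAll u χ))))).fvarJ).erase
        (jForced (ren f g) (.jAll u χ)) = (Fm.fvarJ (.jAll u χ)).image g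
    rw [ih]
    have : Fm.fvarJ (.jAll u χ) = χ.fvarJ.erase u := rfl
    rw [this]
    apply image_update_erase
    intro b hb
    rw [jForced_ren]
    exact lt_sup_succ (Finset.mem_image_of_mem g (by rw [this]; exact hb))

lemma Fm.subst_ren_comp (φ : Fm) (f g f' g' : ℕ → ℕ) :
    (φ.subst (ren f g)).subst (ren f' g') = φ.subst (ren (f' ∘ f) (g' ∘ g)) := by
  induction φ generalizing f g f' g' with
  | pvar x => simp [Fm.subst]
  | pconst d => simp [Fm.subst]
  | imp φ ψ ih1 ih2 => simp [Fm.subst, ih1, ih2]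
  | neg φ ih => simp [Fm.subst, ih]
  | ideq φ ψ ih1 ih2 => simp [Fm.subst, ih1, ih2]
  | ref φ ψ ih1 ih2 => simp [Fm.subst, ih1, ih2]
  | teq s t => simp [Fm.subst, Tm.subst_ren_comp]
  | tle s t => simp [Fm.subst, Tm.subst_ren_comp]
  | isTrue φ ih => simp [Fm.subst, ih]
  | isFalse φ ih => simp [Fm.subst, ih]
  | box φ ih => simp [Fm.subst, ih]
  | just φ t ih => simp [Fm.subst, ih, Tm.subst_ren_comp]
  | fAll x χ ih =>
    have hyfresh : ∀ b ∈ χ.fvarP.erase x, f b < pForced (ren f g) (.fAll x χ) := by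
      intro b hb
      rw [pForced_ren]
      exact lt_sup_succ (Finset.mem_image_of_mem f hb)
    set y := pForced (ren f g) (.fAll x χ) with hydef
    have hz : pForced (ren f' g')
          (.fAll y (χ.subst (ren (Function.update f x y) g)))
        = pForced (ren (f' ∘ f) (g' ∘ g)) (.fAll x χ) := by
      rw [pForced_ren, pForced_ren]
      congr 1
      show ((χ.subst (ren (Function.update f x y) g)).fvarP.erase y).image f'
          = (χ.fvarP.erase x).image (f' ∘ f)
      rw [fvarP_subst_ren, image_update_erase _ _ _ _ hyfresh, Finset.image_image]
    simp only [Fm.subst, ren_updP]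
    rw [hz]
    set z := pForced (ren (f' ∘ f) (g' ∘ g)) (.fAll x χ) with hzdef
    congr 1
    rw [ih]
    apply Fm.subst_congr
    · intro w hw
      simp only [ren_pv]
      congr 1
      by_cases hwx : w = x
      · subst hwx
        simp [Function.comp, Function.update_self]
      · have hfw : f w ≠ y := by
          have := hyfresh w (Finset.mem_erase.mpr ⟨hwx, hw⟩)
          omega
        simp [Function.comp, Function.update_of_ne hwx]
        exact Function.update_of_ne hfw _ _
    · intro w _; rfl
    · rfl
    · rfl
  | jAll u χ ih =>
    have hvfresh : ∀ b ∈ χ.fvarJ.erase u, g b < jForced (ren f g) (.jAll u χ) := by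
      intro b hb
      rw [jForced_ren]
      exact lt_sup_succ (Finset.mem_image_of_mem g hb)
    set v := jForced (ren f g) (.jAll u χ) with hvdef
    have hz : jForced (ren f' g')
          (.jAll v (χ.subst (ren f (Function.update g u v))))
        = jForced (ren (f' ∘ f) (g' ∘ g)) (.jAll u χ) := by
      rw [jForced_ren, jForced_ren]
      congr 1
      show ((χ.subst (ren f (Function.update g u v))).fvarJ.erase v).image g'
          = (χ.fvarJ.erase u).image (g' ∘ g)
      rw [fvarJ_subst_ren, image_update_erase _ _ _ _ hvfresh, Finset.image_image]
    simp only [Fm.subst, ren_updJ]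
    rw [hz]
    set z := jForced (ren (f' ∘ f) (g' ∘ g)) (.jAll u χ) with hzdef
    congr 1
    rw [ih]
    apply Fm.subst_congr
    · intro w _; rfl
    · intro w hw
      simp only [ren_jv]
      congr 1
      by_cases hwu : w = u
      · subst hwu
        simp [Function.comp, Function.update_self]
      · have hgw : g w ≠ v := by
          have := hvfresh w (Finset.mem_erase.mpr ⟨hwu, hw⟩)
          omega
        simp [Function.comp, Function.update_of_ne hwu]
        exact Function.update_of_ne hgw _ _
    · rfl
    · rfl

end EJ
namespace EJ

lemma updJ_ren (v u : ℕ) :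
    Subst.id.updJ v (.var u) = ren id (Function.update id v u) := by
  rw [id_eq_ren, ren_updJ]

lemma updP_ren (y x : ℕ) :
    Subst.id.updP y (.pvar x) = ren (Function.update id y x) id := by
  rw [id_eq_ren, ren_updP]

lemma alpha_subst_ren (φ : Fm) : ∀ f g : ℕ → ℕ,
    (∀ x ∈ φ.fvarP, f x = x) → (∀ u ∈ φ.fvarJ, g u = u) →
    Alpha φ (φ.subst (ren f g)) := by
  induction φ with
  | pvar x =>
    intro f g hp _
    simp only [Fm.subst, ren_pv]
    rw [hp x (by simp [Fm.fvarP])]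
    exact Alpha.refl _
  | pconst d =>
    intro f g _ _
    exact Alpha.refl _
  | imp φ ψ ih1 ih2 =>
    intro f g hp hj
    simp only [Fm.subst]
    exact Alpha.imp
      (ih1 f g (fun x hx => hp x (by simp [Fm.fvarP, hx]))
        (fun u hu => hj u (by simp [Fm.fvarJ, hu])))
      (ih2 f g (fun x hx => hp x (by simp [Fm.fvarP, hx]))
        (fun u hu => hj u (by simp [Fm.fvarJ, hu])))
  | neg φ ih =>
    intro f g hp hj
    exact Alpha.neg (ih f g hp hj)
  | ideq φ ψ ih1 ih2 =>
    intro f g hp hj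
    simp only [Fm.subst]
    exact Alpha.ideq
      (ih1 f g (fun x hx => hp x (by simp [Fm.fvarP, hx]))
        (fun u hu => hj u (by simp [Fm.fvarJ, hu])))
      (ih2 f g (fun x hx => hp x (by simp [Fm.fvarP, hx]))
        (fun u hu => hj u (by simp [Fm.fvarJ, hu])))
  | ref φ ψ ih1 ih2 =>
    intro f g hp hj
    simp only [Fm.subst]
    exact Alpha.ref
      (ih1 f g (fun x hx => hp x (by simp [Fm.fvarP, hx]))
        (fun u hu => hj u (by simp [Fm.fvarJ, hu])))
      (ih2 f g (fun x hx => hp x (by simp [Fm.fvarP, hx]))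
        (fun u hu => hj u (by simp [Fm.fvarJ, hu])))
  | teq s t =>
    intro f g _ hj
    simp only [Fm.subst]
    rw [Tm.subst_ren_id s f g (fun u hu => hj u (by simp [Fm.fvarJ, hu])),
        Tm.subst_ren_id t f g (fun u hu => hj u (by simp [Fm.fvarJ, hu]))]
    exact Alpha.refl _
  | tle s t =>
    intro f g _ hj
    simp only [Fm.subst]
    rw [Tm.subst_ren_id s f g (fun u hu => hj u (by simp [Fm.fvarJ, hu])),
        Tm.subst_ren_id t f g (fun u hu => hj u (by simp [Fm.fvarJ, hu]))]
    exact Alpha.refl _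
  | isTrue φ ih =>
    intro f g hp hj
    exact Alpha.isTrue (ih f g hp hj)
  | isFalse φ ih =>
    intro f g hp hj
    exact Alpha.isFalse (ih f g hp hj)
  | box φ ih =>
    intro f g hp hj
    exact Alpha.box (ih f g hp hj)
  | just φ t ih =>
    intro f g hp hj
    simp only [Fm.subst]
    rw [Tm.subst_ren_id t f g (fun u hu => hj u (by simp [Fm.fvarJ, hu]))]
    exact Alpha.just t (ih f g hp (fun u hu => hj u (by simp [Fm.fvarJ, hu])))
  | fAll x χ ih =>
    intro f g hp hj
    have hyfresh : ∀ b ∈ χ.fvarP.erase x, f b < pForced (ren f g) (.fAll x χ) := by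
      intro b hb
      rw [pForced_ren]
      exact lt_sup_succ (Finset.mem_image_of_mem f hb)
    set y := pForced (ren f g) (.fAll x χ) with hydef
    simp only [Fm.subst, ren_updP]
    apply Alpha.fAll
    · unfold Fm.subst1P
      rw [updP_ren, Fm.subst_ren_comp]
      apply ih
      · intro w hw
        show (Function.update id y x ∘ Function.update f x y) w = w
        by_cases hwx : w = x
        · subst hwx
          simp [Function.comp, Function.update_self]
        · have hfw : f w = w := hp w (Finset.mem_erase.mpr ⟨hwx, hw⟩)
          have hwy : w ≠ y := by
            have := hyfresh w (Finset.mem_erase.mpr ⟨hwx, hw⟩)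
            omega
          simp [Function.comp, Function.update, hwx, hfw, hwy]
      · intro w hw
        show id (g w) = w
        exact hj w hw
    · intro hne hmem
      rw [fvarP_subst_ren] at hmem
      obtain ⟨w, hw, hwe⟩ := Finset.mem_image.mp hmem
      by_cases hwx : w = x
      · subst hwx
        rw [Function.update_self] at hwe
        exact hne hwe.symm
      · rw [Function.update_of_ne hwx] at hwe
        exact hwx (by rw [← hp w (Finset.mem_erase.mpr ⟨hwx, hw⟩), hwe])
  | jAll u χ ih =>
    intro f g hp hj
    have hvfresh : ∀ b ∈ χ.fvarJ.erase u, g b < jForced (ren f g) (.jAll u χ) := by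
      intro b hb
      rw [jForced_ren]
      exact lt_sup_succ (Finset.mem_image_of_mem g hb)
    set v := jForced (ren f g) (.jAll u χ) with hvdef
    simp only [Fm.subst, ren_updJ]
    apply Alpha.jAll
    · unfold Fm.subst1J
      rw [updJ_ren, Fm.subst_ren_comp]
      apply ih
      · intro w hw
        show id (f w) = w
        exact hp w hw
      · intro w hw
        show (Function.update id v u ∘ Function.update g u v) w = w
        by_cases hwu : w = u
        · subst hwu
          simp [Function.comp, Function.update_self]
        · have hgw : g w = w := hj w (Finset.mem_erase.mpr ⟨hwu, hw⟩)
          have hwv : w ≠ v := by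
            have := hvfresh w (Finset.mem_erase.mpr ⟨hwu, hw⟩)
            omega
          simp [Function.comp, Function.update, hwu, hgw, hwv]
    · intro hne hmem
      rw [fvarJ_subst_ren] at hmem
      obtain ⟨w, hw, hwe⟩ := Finset.mem_image.mp hmem
      by_cases hwu : w = u
      · subst hwu
        rw [Function.update_self] at hwe
        exact hne hwe.symm
      · rw [Function.update_of_ne hwu] at hwe
        exact hwu (by rw [← hj w (Finset.mem_erase.mpr ⟨hwu, hw⟩), hwe])

lemma alpha_id (φ : Fm) : Alpha φ (φ.subst Subst.id) := by
  rw [id_eq_ren]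
  exact alpha_subst_ren φ id id (fun _ _ => rfl) (fun _ _ => rfl)

end EJ
namespace EJ

/-! ### derivations from the empty set -/

abbrev Dv (χ : Fm) : Prop := Deriv (∅ : Set Fm) χ

lemma dtaut {χ : Fm} (h : Taut χ) : Dv χ := .ax (.taut h)

lemma taut_id (a : Fm) : Taut (.imp a a) := by
  intro v
  simp only [Fm.evalB]
  cases Fm.evalB v a <;> rfl

lemma taut_impimp (a b : Fm) : Taut (.imp (.imp a a) (.imp b b)) := by
  intro v
  simp only [Fm.evalB]
  cases Fm.evalB v a <;> cases Fm.evalB v b <;> rfl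

lemma taut_iff1 (a b : Fm) : Taut (.imp (Fm.iff a b) (.imp a b)) := by
  intro v
  simp only [Fm.iff, Fm.and, Fm.evalB]
  cases Fm.evalB v a <;> cases Fm.evalB v b <;> rfl

lemma taut_iff2 (a b : Fm) : Taut (.imp (Fm.iff a b) (.imp b a)) := by
  intro v
  simp only [Fm.iff, Fm.and, Fm.evalB]
  cases Fm.evalB v a <;> cases Fm.evalB v b <;> rfl

lemma taut_and_intro (a b : Fm) : Taut (.imp a (.imp b (Fm.and a b))) := by
  intro v
  simp only [Fm.and, Fm.evalB]
  cases Fm.evalB v a <;> cases Fm.evalB v b <;> rfl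

lemma iff_elim1 {a b : Fm} (h : Dv (Fm.iff a b)) : Dv (.imp a b) :=
  .mp (dtaut (taut_iff1 a b)) h

lemma iff_elim2 {a b : Fm} (h : Dv (Fm.iff a b)) : Dv (.imp b a) :=
  .mp (dtaut (taut_iff2 a b)) h

lemma dand_intro {a b : Fm} (ha : Dv a) (hb : Dv b) : Dv (Fm.and a b) :=
  .mp (.mp (dtaut (taut_and_intro a b)) ha) hb

/-! ### vacuous and general justification generalization -/

lemma vac_gen {χ : Fm} (v : ℕ) (hχ : Dv χ) (hv : v ∉ χ.fvarJ) :
    Dv (.jAll v χ) := by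
  set E : Fm := .just (.pvar 0) (.var v) with hE
  have hEv : v ∈ (Fm.imp E E).fvarJ := by simp [hE, Fm.fvarJ, Tm.vars]
  have a1 : Ax (.jAll v (.imp E E)) :=
    Ax.genJ (Ax.taut (taut_id E)) hEv
  have a2 : Ax (.jAll v (.imp (.imp E E) (.imp χ χ))) := by
    exact Ax.genJ (Ax.taut (taut_impimp E χ)) (by simp [hE, Fm.fvarJ, Tm.vars])
  have d3 : Dv (.jAll v (.imp χ χ)) :=
    .mp (.mp (.ax (Ax.jDistrib (.imp χ χ) (.imp E E) v)) (.ax a2)) (.ax a1)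
  exact .mp (.mp (.ax (Ax.jVac χ χ v hv)) d3) hχ

lemma genAll {χ : Fm} (v : ℕ) (d : Dv χ) : Dv (.jAll v χ) := by
  induction d with
  | hyp h => exact absurd h (Set.notMem_empty _)
  | ax h =>
    rename_i ρ
    by_cases hv : v ∈ ρ.fvarJ
    · exact .ax (Ax.genJ h hv)
    · exact vac_gen v (.ax h) hv
  | mp h1 h2 ih1 ih2 =>
    exact .mp (.mp (.ax (Ax.jDistrib _ _ v)) ih1) ih2

/-! ### reflexivity facts -/

lemma ideq_refl (a : Fm) : Dv (.ideq a a) := .ax (.alphaAx (.refl a))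

lemma tle_refl (s : Tm) : Dv (.tle s s) := by
  have hinner : Ax (.fAll 0 (.imp (.just (.pvar 0) s) (.just (.pvar 0) s))) := by
    exact Ax.genP (Ax.taut (taut_id _)) (by simp [Fm.fvarP])
  exact .mp (iff_elim2 (.ax (Ax.leDef s s 0))) (.ax hinner)

lemma teq_refl (s : Tm) : Dv (.teq s s) :=
  .mp (iff_elim2 (.ax (Ax.ext s s))) (dand_intro (tle_refl s) (tle_refl s))

/-! ### big conjunctions -/

lemma dBigAnd : ∀ (L : List Fm), (∀ χ ∈ L, Dv χ) → Dv (bigAnd L)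
  | [], _ => dtaut (taut_id _)
  | [χ], h => by simpa [bigAnd] using h χ (by simp)
  | χ :: ψ :: L, h => by
    simp only [bigAnd]
    exact dand_intro (h χ (by simp))
      (dBigAnd (ψ :: L) (fun ρ hρ => h ρ (List.mem_cons_of_mem _ hρ)))

end EJ
namespace EJ

/-! ### identity congruences via substP -/

lemma ideq_congr2 {A B A' B' : Fm}
    (hA : Dv (.ideq A A')) (hB : Dv (.ideq B B')) (h : Dv (.ideq A B)) :
    Dv (.ideq A' B') := by
  set σa := (Subst.id.updP 0 A).updP 1 B with hσa
  set σb := (Subst.id.updP 0 A').updP 1 B' with hσb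
  set χT : Fm := .ideq (.pvar 0) (.pvar 1) with hχT
  have c1 : χT.subst σa = .ideq A B := by
    simp [hχT, hσa, Fm.subst, Subst.updP, Subst.id, Function.update]
  have c2 : χT.subst σb = .ideq A' B' := by
    simp [hχT, hσb, Fm.subst, Subst.updP, Subst.id, Function.update]
  have heq : Dv (eqOnF σa σb χT) := by
    apply dBigAnd
    intro ρ hρ
    rcases List.mem_append.mp hρ with hl | hr
    · obtain ⟨x, hx, rfl⟩ := List.mem_map.mp hl
      have hx' : x ∈ χT.fvarP := (Finset.mem_sort _).mp hx
      have : x = 0 ∨ x = 1 := by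
        simpa [hχT, Fm.fvarP] using hx'
      rcases this with rfl | rfl
      · simpa [hσa, hσb, Subst.updP, Subst.id, Function.update] using hA
      · simpa [hσa, hσb, Subst.updP, Subst.id, Function.update] using hB
    · obtain ⟨x, hx, rfl⟩ := List.mem_map.mp hr
      have hx' : x ∈ χT.fvarJ := (Finset.mem_sort _).mp hx
      simp [hχT, Fm.fvarJ] at hx'
  have h2 : Dv (.ideq (.ideq A B) (.ideq A' B')) := by
    have h3 := Deriv.mp (.ax (Ax.substP σa σb χT)) heq
    rwa [c1, c2] at h3
  exact Deriv.mp (.mp (.ax (Ax.eqImp _ _)) h2) h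

lemma ideq_symm {A B : Fm} (h : Dv (.ideq A B)) : Dv (.ideq B A) :=
  ideq_congr2 h (ideq_refl A) (ideq_refl A)

lemma just_congr {A A' : Fm} (t : Tm) (h : Dv (.ideq A A')) :
    Dv (.imp (.just A t) (.just A' t)) := by
  set σa := Subst.id.updP 0 A with hσa
  set σb := Subst.id.updP 0 A' with hσb
  set χJ : Fm := .just (.pvar 0) t with hχJ
  have hta : t.subst σa = t := Tm.subst_idlike t σa rfl rfl
  have htb : t.subst σb = t := Tm.subst_idlike t σb rfl rfl
  have ea : σa.pv 0 = A := by
    simp [hσa, Subst.updP, Subst.id, Function.update]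
  have eb : σb.pv 0 = A' := by
    simp [hσb, Subst.updP, Subst.id, Function.update]
  have c1 : χJ.subst σa = .just A t := by
    show Fm.subst (.just (.pvar 0) t) σa = _
    simp only [Fm.subst, hta, ea]
  have c2 : χJ.subst σb = .just A' t := by
    show Fm.subst (.just (.pvar 0) t) σb = _
    simp only [Fm.subst, htb, eb]
  have heq : Dv (eqOnF σa σb χJ) := by
    apply dBigAnd
    intro ρ hρ
    rcases List.mem_append.mp hρ with hl | hr
    · obtain ⟨x, hx, rfl⟩ := List.mem_map.mp hl
      have hx' : x ∈ χJ.fvarP := (Finset.mem_sort _).mp hx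
      have : x = 0 := by simpa [hχJ, Fm.fvarP] using hx'
      subst this
      simpa [hσa, hσb, Subst.updP, Subst.id, Function.update] using h
    · obtain ⟨x, hx, rfl⟩ := List.mem_map.mp hr
      have : σa.jv x = Tm.var x ∧ σb.jv x = Tm.var x := ⟨rfl, rfl⟩
      rw [this.1, this.2]
      exact teq_refl _
  have h2 : Dv (.ideq (.just A t) (.just A' t)) := by
    have h3 := Deriv.mp (.ax (Ax.substP σa σb χJ)) heq
    rwa [c1, c2] at h3
  exact .mp (.ax (Ax.eqImp _ _)) h2

/-- MAIN LEMMA: substituting for a variable not free is an identity. -/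
lemma main_ideq (φ : Fm) (w : ℕ) (t : Tm) (hw : w ∉ φ.fvarJ) :
    Dv (.ideq φ (φ.subst1J w t)) := by
  set σ' := Subst.id.updJ w t with hσ'
  have heq : Dv (eqOnF Subst.id σ' φ) := by
    apply dBigAnd
    intro ρ hρ
    rcases List.mem_append.mp hρ with hl | hr
    · obtain ⟨x, hx, rfl⟩ := List.mem_map.mp hl
      have : Subst.id.pv x = .pvar x ∧ σ'.pv x = .pvar x := ⟨rfl, rfl⟩
      rw [this.1, this.2]
      exact ideq_refl _
    · obtain ⟨x, hx, rfl⟩ := List.mem_map.mp hr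
      have hx' : x ∈ φ.fvarJ := (Finset.mem_sort _).mp hx
      have hxw : x ≠ w := fun hc => hw (hc ▸ hx')
      have e1 : Subst.id.jv x = .var x := rfl
      have e2 : σ'.jv x = .var x := by
        simp [hσ', Subst.updJ, Subst.id, Function.update, hxw]
      rw [e1, e2]
      exact teq_refl _
  have h1 : Dv (.ideq (φ.subst Subst.id) (φ.subst σ')) :=
    .mp (.ax (Ax.substP Subst.id σ' φ)) heq
  have hA : Dv (.ideq (φ.subst Subst.id) φ) :=
    .ax (.alphaAx (.symm (alpha_id φ)))
  exact ideq_congr2 hA (ideq_refl (φ.subst σ')) h1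

/-! ### tautologies for the K derivation -/

lemma taut_c1 (a b c : Fm) :
    Taut (.imp (.imp a b) (.imp (.imp c (.neg b)) (.imp a (.neg c)))) := by
  intro v
  simp only [Fm.evalB]
  cases Fm.evalB v a <;> cases Fm.evalB v b <;> cases Fm.evalB v c <;> rfl

lemma taut_c2 (a b c d : Fm) :
    Taut (.imp (.imp a (.imp b c)) (.imp (.imp c d) (.imp a (.imp b d)))) := by
  intro v
  simp only [Fm.evalB]
  cases Fm.evalB v a <;> cases Fm.evalB v b <;> cases Fm.evalB v c <;>
    cases Fm.evalB v d <;> rfl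

lemma taut_c3 (a b c : Fm) :
    Taut (.imp (.imp a (.imp b c)) (.imp (Fm.and (.neg c) a) (.neg b))) := by
  intro v
  simp only [Fm.and, Fm.evalB]
  cases Fm.evalB v a <;> cases Fm.evalB v b <;> cases Fm.evalB v c <;> rfl

lemma taut_c4 (g p w' : Fm) :
    Taut (.imp (.imp (Fm.and (.neg g) p) w')
      (.imp (.neg w') (.imp (.neg g) (.neg p)))) := by
  intro v
  simp only [Fm.and, Fm.evalB]
  cases Fm.evalB v g <;> cases Fm.evalB v p <;> cases Fm.evalB v w' <;> rfl

lemma taut_c5 (a b c : Fm) :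
    Taut (.imp (.imp a b) (.imp (.imp b c) (.imp a c))) := by
  intro v
  simp only [Fm.evalB]
  cases Fm.evalB v a <;> cases Fm.evalB v b <;> cases Fm.evalB v c <;> rfl

lemma taut_c6 (b aw w : Fm) :
    Taut (.imp (.imp b (.imp (.neg (.neg aw)) w))
      (.imp (.neg w) (.imp b (.neg aw)))) := by
  intro v
  simp only [Fm.evalB]
  cases Fm.evalB v b <;> cases Fm.evalB v aw <;> cases Fm.evalB v w <;> rfl

lemma taut_c7 (b1 b2 b3 a b g : Fm) :
    Taut (.imp (.imp b1 a) (.imp (.imp b2 b) (.imp (.imp a (.imp b g))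
      (.imp (.imp g b3) (.imp b1 (.imp b2 b3)))))) := by
  intro v
  simp only [Fm.evalB]
  cases Fm.evalB v b1 <;> cases Fm.evalB v b2 <;> cases Fm.evalB v b3 <;>
    cases Fm.evalB v a <;> cases Fm.evalB v b <;> cases Fm.evalB v g <;> rfl

/-! ### Axiom K is derivable -/

lemma Kbox (ψ φ : Fm) :
    Dv (.imp (.box (.imp ψ φ)) (.imp (.box ψ) (.box φ))) := by
  set M := (ψ.fvarJ ∪ φ.fvarJ).sup Nat.succ with hM
  have hfresh : ∀ a ∈ ψ.fvarJ ∪ φ.fvarJ, a < M := fun a ha => lt_sup_succ ha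
  have hfψ : ∀ a ∈ ψ.fvarJ, a < M := fun a ha => hfresh a (by simp [ha])
  have hfφ : ∀ a ∈ φ.fvarJ, a < M := fun a ha => hfresh a (by simp [ha])
  set u := M with hu
  set v := M + 1 with hv
  set w := M + 2 with hw
  have huψφ : u ∉ (Fm.imp ψ φ).fvarJ := by
    simp only [Fm.fvarJ, Finset.mem_union]
    rintro (h | h)
    · exact absurd (hfψ u h) (by omega)
    · exact absurd (hfφ u h) (by omega)
  have hvψ : v ∉ ψ.fvarJ := fun h => absurd (hfψ v h) (by omega)
  have hvφ : v ∉ φ.fvarJ := fun h => absurd (hfφ v h) (by omega)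
  have huψ : u ∉ ψ.fvarJ := fun h => absurd (hfψ u h) (by omega)
  have huφ : u ∉ φ.fvarJ := fun h => absurd (hfφ u h) (by omega)
  have hwφ : w ∉ φ.fvarJ := fun h => absurd (hfφ w h) (by omega)
  set P : Fm := .just (.imp ψ φ) (.var u) with hP
  set Q : Fm := .just ψ (.var v) with hQ
  set t : Tm := .app (.var u) (.var v) with ht
  set R : Fm := .just φ t with hR
  set AllW : Fm := .jAll w (.neg (.just φ (.var w))) with hAllW
  set G : Fm := .neg AllW with hG
  have hGjex : Fm.jEx w (.just φ (.var w)) = G := rfl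
  -- necJust components
  have n1 : Dv (.imp (.box (.imp ψ φ)) (Fm.jEx u P)) :=
    iff_elim1 (.ax (Ax.necJust (.imp ψ φ) u huψφ))
  have n2 : Dv (.imp (.box ψ) (Fm.jEx v Q)) :=
    iff_elim1 (.ax (Ax.necJust ψ v hvψ))
  have n3 : Dv (.imp G (.box φ)) := by
    have := iff_elim2 (.ax (Ax.necJust φ w hwφ))
    rwa [hGjex] at this
  -- application axiom
  have happl : Dv (.imp P (.imp Q R)) := .ax (Ax.appl ψ φ (.var u) (.var v))
  -- the bridge through the main lemma
  have hmain : Dv (.ideq φ (φ.subst1J w t)) := main_ideq φ w t hwφ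
  have hbridge : Dv (.imp R (.just (φ.subst1J w t) t)) := just_congr t hmain
  have hinst : Dv (.imp AllW (.neg (.just (φ.subst1J w t) t))) := by
    have h0 : Dv (.imp AllW ((Fm.neg (.just φ (.var w))).subst1J w t)) :=
      .ax (Ax.jAllInst (.neg (.just φ (.var w))) w t)
    have hc : (Fm.neg (.just φ (.var w))).subst1J w t
        = .neg (.just (φ.subst1J w t) t) := by
      simp [Fm.subst1J, Fm.subst, Tm.subst, Subst.updJ, Subst.id, Function.update]
    rwa [hc] at h0
  have s7 : Dv (.imp R G) :=
    .mp (.mp (dtaut (taut_c1 R (.just (φ.subst1J w t) t) AllW)) hbridge) hinst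
  have s8 : Dv (.imp P (.imp Q G)) :=
    .mp (.mp (dtaut (taut_c2 P Q R G)) happl) s7
  set X : Fm := Fm.and (.neg G) P with hX
  have s9 : Dv (.imp X (.neg Q)) := .mp (dtaut (taut_c3 P Q G)) s8
  have s10 : Dv (.jAll v (.imp X (.neg Q))) := genAll v s9
  have hvX : v ∉ X.fvarJ := by
    simp only [hX, hG, hAllW, hP, Fm.and, Fm.fvarJ, Tm.vars, Finset.mem_union,
      Finset.mem_erase, Finset.mem_singleton]
    rintro ((⟨_, (h | h)⟩) | ((h | h) | h))
    · exact absurd (hfφ v h) (by omega)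
    · omega
    · exact absurd (hfψ v h) (by omega)
    · exact absurd (hfφ v h) (by omega)
    · omega
  have s11 : Dv (.imp X (.jAll v (.neg Q))) :=
    .mp (.ax (Ax.jVac (.neg Q) X v hvX)) s10
  have s12 : Dv (.imp (.neg (.jAll v (.neg Q))) (.imp (.neg G) (.neg P))) :=
    .mp (dtaut (taut_c4 G P (.jAll v (.neg Q)))) s11
  have s13 := genAll u s12
  have huB : u ∉ (Fm.neg (.jAll v (.neg Q))).fvarJ := by
    simp only [hQ, Fm.fvarJ, Tm.vars, Finset.mem_erase, Finset.mem_union,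
      Finset.mem_singleton]
    rintro ⟨_, (h | h)⟩
    · exact absurd (hfψ u h) (by omega)
    · omega
  have s14 : Dv (.imp (.neg (.jAll v (.neg Q))) (.jAll u (.imp (.neg G) (.neg P)))) :=
    .mp (.ax (Ax.jVac (.imp (.neg G) (.neg P)) (.neg (.jAll v (.neg Q))) u huB)) s13
  have huG : u ∉ (Fm.neg G).fvarJ := by
    simp only [hG, hAllW, Fm.fvarJ, Tm.vars, Finset.mem_erase, Finset.mem_union,
      Finset.mem_singleton]
    rintro ⟨_, (h | h)⟩
    · exact absurd (hfφ u h) (by omega)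
    · omega
  have s15ax : Dv (.imp (.jAll u (.imp (.neg G) (.neg P)))
      (.imp (.neg G) (.jAll u (.neg P)))) :=
    .ax (Ax.jVac (.neg P) (.neg G) u huG)
  have s15 : Dv (.imp (.neg (.jAll v (.neg Q))) (.imp (.neg G) (.jAll u (.neg P)))) :=
    .mp (.mp (dtaut (taut_c5 _ _ _)) s14) s15ax
  have s16 : Dv (.imp (.neg (.jAll u (.neg P))) (.imp (.neg (.jAll v (.neg Q))) G)) := by
    exact Deriv.mp (dtaut (taut_c6 (.neg (.jAll v (.neg Q))) AllW (.jAll u (.neg P)))) s15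
  exact .mp (.mp (.mp (.mp (dtaut (taut_c7 (.box (.imp ψ φ)) (.box ψ) (.box φ)
    (.neg (.jAll u (.neg P))) (.neg (.jAll v (.neg Q))) G)) n1) n2) s16) n3

/-! ### lifting to Deriv4 -/

lemma lift {χ : Fm} (h : Dv χ) : Deriv4 (∅ : Set Fm) χ := by
  induction h with
  | hyp h => exact absurd h (Set.notMem_empty _)
  | ax h => exact .ax (.base h)
  | mp _ _ ih1 ih2 => exact .mp ih1 ih2

end EJ
/-- Necessitation is admissible in Ax + (4) + (AxNec). -/
theorem necessitation (φ : EJ.Fm) (h : EJ.Deriv4 ∅ φ) :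
    EJ.Deriv4 ∅ (.box φ) := by
  induction h with
  | hyp h => exact absurd h (Set.notMem_empty _)
  | ax h => exact .axnec h
  | axnec h => exact .mp (.ax (.four _)) (.axnec h)
  | mp _ _ ih1 ih2 => exact .mp (.mp (EJ.lift (EJ.Kbox _ _)) ih1) ih2
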